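/- arXiv:2105.06329 — 3 statements merged into one kernel-verified Lean document; each statement's English description precedes it below -/
import Mathlib

section
/- Let μ be a diagonalizable endomorphism of a finite-dimensional complex vector space V. Under the dualization anti-isomorphism f ↦ f* from End(V) to End(V*), the image of the Lie algebra 𝔠(μ) of μ-nilpotent operators is exactly 𝔠(−μ*), the Lie algebra of (−μ*)-nilpotent operators on V*. -/
/-- `A` is `ν`-nilpotent: `A` maps the `ν_α`-eigenspace of `ν` into the direct
sum of the eigenspaces for eigenvalues `ν_α + m`, `m ≥ 1`. -/
def IsMuNilpotent {W : Type*} [AddCommGroup W] [Module ℂ W]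
    (ν : Module.End ℂ W) (A : Module.End ℂ W) : Prop :=
  ∀ c : ℂ, (ν.eigenspace c).map A ≤ ⨆ m : ℕ+, ν.eigenspace (c + ((m : ℕ) : ℂ))

namespace Stmt3Aux

variable {V : Type*} [AddCommGroup V] [Module ℂ V]

lemma eig_neg {W : Type*} [AddCommGroup W] [Module ℂ W] (f : Module.End ℂ W) (c : ℂ) :
    (-f).eigenspace c = f.eigenspace (-c) := by
  ext x
  rw [Module.End.mem_eigenspace_iff, Module.End.mem_eigenspace_iff, LinearMap.neg_apply,
    neg_smul, neg_eq_iff_eq_neg]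

lemma vanish_of_mem_dual_eig (μ : Module.End ℂ V) {c d : ℂ} (hcd : d ≠ c)
    {φ : Module.Dual ℂ V} (hφ : φ ∈ Module.End.eigenspace (LinearMap.dualMap μ) c)
    {v : V} (hv : v ∈ μ.eigenspace d) : φ v = 0 := by
  rw [Module.End.mem_eigenspace_iff] at hφ hv
  have h1 := LinearMap.congr_fun hφ v
  simp only [LinearMap.dualMap_apply, hv, map_smul, smul_eq_mul, LinearMap.smul_apply] at h1
  have hx : (d - c) * φ v = 0 := by linear_combination h1
  exact (mul_eq_zero.mp hx).resolve_left (sub_ne_zero.mpr hcd)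

lemma mem_dual_eig (μ : Module.End ℂ V) (hdiag : (⨆ c : ℂ, μ.eigenspace c) = ⊤)
    {c : ℂ} {φ : Module.Dual ℂ V}
    (h : ∀ d, d ≠ c → ∀ v ∈ μ.eigenspace d, φ v = 0) :
    φ ∈ Module.End.eigenspace (LinearMap.dualMap μ) c := by
  rw [Module.End.mem_eigenspace_iff, ← sub_eq_zero]
  have hker : ∀ d, μ.eigenspace d ≤ LinearMap.ker (LinearMap.dualMap μ φ - c • φ) := by
    intro d v hv
    have hv' := Module.End.mem_eigenspace_iff.mp hv
    rw [LinearMap.mem_ker, LinearMap.sub_apply, LinearMap.dualMap_apply, hv', map_smul,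
      LinearMap.smul_apply]
    by_cases hdc : d = c
    · subst hdc; rw [sub_self]
    · rw [h d hdc v hv, smul_zero, smul_zero, sub_self]
  have htop : (⊤ : Submodule ℂ V) ≤ LinearMap.ker (LinearMap.dualMap μ φ - c • φ) :=
    hdiag ▸ iSup_le hker
  exact LinearMap.ker_eq_top.mp (top_le_iff.mp htop)

lemma exists_proj [FiniteDimensional ℂ V] (μ : Module.End ℂ V)
    (hdiag : (⨆ c : ℂ, μ.eigenspace c) = ⊤) :
    ∃ (s : Finset ℂ) (π : ℂ → Module.End ℂ V),
      (∀ d v, π d v ∈ μ.eigenspace d) ∧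
      (∀ d, ∀ v ∈ μ.eigenspace d, π d v = v) ∧
      (∀ d e, d ≠ e → ∀ v ∈ μ.eigenspace d, π e v = 0) ∧
      (∀ v, v = ∑ d ∈ s, π d v) := by
  classical
  have hind := μ.eigenspaces_iSupIndep
  have hint : DirectSum.IsInternal (fun c : ℂ => μ.eigenspace c) :=
    DirectSum.isInternal_submodule_of_iSupIndep_of_iSup_eq_top hind hdiag
  set e := LinearEquiv.ofBijective (DirectSum.coeLinearMap (fun c : ℂ => μ.eigenspace c)) hint
    with he
  have hfin : {c : ℂ | μ.eigenspace c ≠ ⊥}.Finite :=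
    WellFoundedGT.finite_ne_bot_of_iSupIndep hind
  refine ⟨hfin.toFinset,
    fun d => (μ.eigenspace d).subtype ∘ₗ
      (DirectSum.component ℂ ℂ (fun c : ℂ => (μ.eigenspace c : Submodule ℂ V)) d) ∘ₗ
      (e.symm : V →ₗ[ℂ] _), ?_, ?_, ?_, ?_⟩
  · intro d v
    exact SetLike.coe_mem _
  · intro d v hv
    simp only [LinearMap.comp_apply, LinearEquiv.coe_coe, Submodule.coe_subtype,
      ← DirectSum.apply_eq_component]
    have h1 := hint.ofBijective_coeLinearMap_of_mem hv
    rw [← he] at h1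
    rw [h1]
  · intro d f hdf v hv
    simp only [LinearMap.comp_apply, LinearEquiv.coe_coe, Submodule.coe_subtype,
      ← DirectSum.apply_eq_component]
    have h1 := hint.ofBijective_coeLinearMap_of_mem_ne hdf hv
    rw [← he] at h1
    rw [h1, Submodule.coe_zero]
  · intro v
    simp only [LinearMap.comp_apply, LinearEquiv.coe_coe, Submodule.coe_subtype,
      ← DirectSum.apply_eq_component]
    set x := e.symm v with hx
    have h0 : v = DirectSum.coeLinearMap (fun c : ℂ => μ.eigenspace c) x := by
      conv_lhs => rw [← e.apply_symm_apply v]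
      rfl
    rw [h0, DirectSum.coeLinearMap_eq_dfinsuppSum, DFinsupp.sum]
    apply Finset.sum_subset
    · intro i hi
      rw [Set.Finite.mem_toFinset]
      intro hbot
      apply DFinsupp.mem_support_iff.mp hi
      exact Subtype.ext ((Submodule.eq_bot_iff _).mp hbot _ (SetLike.coe_mem _))
    · intro i _ hi
      rw [DFinsupp.notMem_support_iff.mp hi, Submodule.coe_zero]

lemma forward [FiniteDimensional ℂ V] (μ : Module.End ℂ V)
    (hdiag : (⨆ c : ℂ, μ.eigenspace c) = ⊤) {A : Module.End ℂ V}
    (hA : IsMuNilpotent μ A) :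
    IsMuNilpotent (-(LinearMap.dualMap μ) : Module.End ℂ (Module.Dual ℂ V)) A.dualMap := by
  classical
  obtain ⟨s, π, hmem, hid, hzero, hsum⟩ := exists_proj μ hdiag
  intro c ψ hψ
  rw [Submodule.mem_map] at hψ
  obtain ⟨φ, hφ, rfl⟩ := hψ
  rw [eig_neg] at hφ
  have hdecomp : A.dualMap φ = ∑ d ∈ s, (φ ∘ₗ (A ∘ₗ π d)) := by
    ext v
    simp only [LinearMap.dualMap_apply, LinearMap.coe_sum, Finset.sum_apply,
      LinearMap.comp_apply]
    conv_lhs => rw [hsum v]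
    rw [map_sum, map_sum]
  rw [hdecomp]
  apply Submodule.sum_mem
  intro d _
  by_cases hcase : ∃ m : ℕ+, d + ((m : ℕ) : ℂ) = -c
  · obtain ⟨m, hm⟩ := hcase
    apply Submodule.mem_iSup_of_mem m
    rw [eig_neg]
    have hcd : -(c + ((m : ℕ) : ℂ)) = d := by linear_combination -hm
    rw [hcd]
    apply mem_dual_eig μ hdiag
    intro e he w hw
    simp only [LinearMap.comp_apply, hzero e d he w hw, map_zero]
  · push_neg at hcase
    have hz : (φ ∘ₗ (A ∘ₗ π d)) = 0 := by
      ext v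
      have h3 := hA d (Submodule.mem_map_of_mem (hmem d v))
      have h4 : (⨆ m : ℕ+, μ.eigenspace (d + ((m : ℕ) : ℂ))) ≤ LinearMap.ker φ := by
        apply iSup_le
        intro m w hw
        exact LinearMap.mem_ker.mpr (vanish_of_mem_dual_eig μ (hcase m) hφ hw)
      simpa using h4 h3
    rw [hz]
    exact Submodule.zero_mem _

lemma backward [FiniteDimensional ℂ V] (μ : Module.End ℂ V)
    (hdiag : (⨆ c : ℂ, μ.eigenspace c) = ⊤) {B : Module.End ℂ (Module.Dual ℂ V)}
    (hB : IsMuNilpotent (-(LinearMap.dualMap μ) : Module.End ℂ (Module.Dual ℂ V)) B) :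
    ∃ A : Module.End ℂ V, IsMuNilpotent μ A ∧ B = A.dualMap := by
  classical
  obtain ⟨s, π, hmem, hid, hzero, hsum⟩ := exists_proj μ hdiag
  set ee := Module.evalEquiv ℂ V with hee
  set A : Module.End ℂ V := ee.symm.toLinearMap ∘ₗ B.dualMap ∘ₗ ee.toLinearMap with hA
  have hAB : ∀ (φ : Module.Dual ℂ V) (v : V), φ (A v) = (B φ) v := by
    intro φ v
    have h1 : ee (A v) = B.dualMap (ee v) := by
      simp [hA]
    have h2 := congrArg (fun (ψ : Module.Dual ℂ (Module.Dual ℂ V)) => ψ φ) h1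
    simpa [hee, Module.evalEquiv_apply, Module.Dual.eval_apply] using h2
  have hBA : B = A.dualMap := by
    ext φ v
    rw [LinearMap.dualMap_apply, hAB]
  refine ⟨A, ?_, hBA⟩
  intro c w hw
  rw [Submodule.mem_map] at hw
  obtain ⟨v, hv, rfl⟩ := hw
  rw [hsum (A v)]
  apply Submodule.sum_mem
  intro d _
  by_cases hcase : ∃ m : ℕ+, d = c + ((m : ℕ) : ℂ)
  · obtain ⟨m, rfl⟩ := hcase
    exact Submodule.mem_iSup_of_mem m (hmem _ _)
  · push_neg at hcase
    have hzd : π d (A v) = 0 := by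
      rw [← Module.forall_dual_apply_eq_zero_iff ℂ (π d (A v))]
      intro φ₀
      set φ : Module.Dual ℂ V := φ₀ ∘ₗ π d with hφdef
      have hφ : φ ∈ Module.End.eigenspace (LinearMap.dualMap μ) d := by
        apply mem_dual_eig μ hdiag
        intro e he w hwE
        simp only [hφdef, LinearMap.comp_apply, hzero e d he w hwE, map_zero]
      have hφ' : φ ∈ Module.End.eigenspace
          (-(LinearMap.dualMap μ) : Module.End ℂ (Module.Dual ℂ V)) (-d) := by
        rw [eig_neg, neg_neg]; exact hφ
      have h3 := hB (-d) (Submodule.mem_map_of_mem hφ')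
      have h4 : (⨆ m : ℕ+, Module.End.eigenspace
            (-(LinearMap.dualMap μ) : Module.End ℂ (Module.Dual ℂ V)) (-d + ((m : ℕ) : ℂ))) ≤
          LinearMap.ker (Module.Dual.eval ℂ V v) := by
        apply iSup_le
        intro m ψ hψ
        rw [eig_neg] at hψ
        rw [LinearMap.mem_ker, Module.Dual.eval_apply]
        have hne : c ≠ -(-d + ((m : ℕ) : ℂ)) := by
          intro h
          exact hcase m (by linear_combination -h)
        exact vanish_of_mem_dual_eig μ hne hψ hv
      have h5 := h4 h3
      rw [LinearMap.mem_ker, Module.Dual.eval_apply] at h5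
      rw [← hAB φ v] at h5
      simpa [hφdef] using h5
    rw [hzd]
    exact Submodule.zero_mem _

end Stmt3Aux


/-- Under the dualization anti-isomorphism `f ↦ f*`, the image of the Lie
algebra `𝔠(μ)` of `μ`-nilpotent operators is exactly `𝔠(−μ*)`. -/
theorem stmt3 {V : Type*} [AddCommGroup V] [Module ℂ V] [FiniteDimensional ℂ V]
    (μ : Module.End ℂ V)
    (hdiag : (⨆ c : ℂ, μ.eigenspace c) = ⊤) :
    ∀ B : Module.End ℂ (Module.Dual ℂ V),
      (∃ A : Module.End ℂ V, IsMuNilpotent μ A ∧ B = A.dualMap) ↔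
        IsMuNilpotent (-(LinearMap.dualMap μ) : Module.End ℂ (Module.Dual ℂ V)) B := by
  intro B
  constructor
  · rintro ⟨A, hA, rfl⟩
    exact Stmt3Aux.forward μ hdiag hA
  · exact Stmt3Aux.backward μ hdiag
end

section
/- Under the hypotheses of the compatibility relations [E_i, Ṽ] = [U, Ṽ_i] and ∂_i Ṽ = [Ṽ_i, Ṽ], where the off-diagonal parts satisfy Ṽ_i − Ṽ_i' = [Γ̃, E_i] and Ṽ − Ṽ' = [Γ̃, U] for an off-diagonal matrix Γ̃ (primes denote diagonal parts), the diagonal entries of Ṽ are constant: ∂_i (Ṽ^j_j) = 0 for all i, j. -/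
noncomputable section

/-- Partial derivative `∂f/∂uⁱ` of a scalar function of `n` complex variables. -/
def pd {n : ℕ} (f : (Fin n → ℂ) → ℂ) (i : Fin n) : (Fin n → ℂ) → ℂ :=
  fun u => fderiv ℂ f u (Pi.single i 1)

/-- Entrywise partial derivative of a matrix-valued function. -/
def pdM {n : ℕ} (M : (Fin n → ℂ) → Matrix (Fin n) (Fin n) ℂ) (i : Fin n)
    (u : Fin n → ℂ) : Matrix (Fin n) (Fin n) ℂ :=
  Matrix.of fun j k => pd (fun v => M v j k) i u

/-- Diagonal part of a matrix. -/
def diagPart {n : ℕ} (M : Matrix (Fin n) (Fin n) ℂ) : Matrix (Fin n) (Fin n) ℂ :=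
  Matrix.diagonal fun j => M j j

/-- `E_i`: the matrix with a single nonzero entry `1` at `(i,i)`. -/
def Emat {n : ℕ} (i : Fin n) : Matrix (Fin n) (Fin n) ℂ :=
  Matrix.single i i 1

/-- Under the compatibility relations `[E_i,Ṽ] = [U,Ṽ_i]`, `∂_iṼ = [Ṽ_i,Ṽ]`,
with the off-diagonal structure `Ṽ_i − Ṽ_i' = [Γ̃,E_i]`, `Ṽ − Ṽ' = [Γ̃,U]`
for an off-diagonal `Γ̃`, the diagonal entries of `Ṽ` are constant in `u`. -/
theorem stmt7 {n : ℕ}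
    (Vt : Fin n → (Fin n → ℂ) → Matrix (Fin n) (Fin n) ℂ)
    (Vm : (Fin n → ℂ) → Matrix (Fin n) (Fin n) ℂ)
    (G : (Fin n → ℂ) → Matrix (Fin n) (Fin n) ℂ)
    (hGoff : ∀ u i, G u i i = 0)
    (h3 : ∀ i u, Emat i * Vm u - Vm u * Emat i
        = Matrix.diagonal u * Vt i u - Vt i u * Matrix.diagonal u)
    (h4 : ∀ i u, pdM Vm i u = Vt i u * Vm u - Vm u * Vt i u)
    (hVi : ∀ i u, Vt i u - diagPart (Vt i u) = G u * Emat i - Emat i * G u)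
    (hV : ∀ u, Vm u - diagPart (Vm u)
        = G u * Matrix.diagonal u - Matrix.diagonal u * G u) :
    ∀ i j : Fin n, ∀ u, pd (fun v => Vm v j j) i u = 0 := by
  intro i j u
  -- off-diagonal entries of Vt i u
  have hVt : ∀ a b : Fin n, a ≠ b →
      Vt i u a b = G u a b * ((if b = i then (1:ℂ) else 0) - if a = i then 1 else 0) := by
    intro a b hab
    have h := congrFun (congrFun (hVi i u) a) b
    simp only [Matrix.sub_apply, diagPart, Matrix.diagonal_apply_ne _ hab,
      Matrix.mul_apply, Emat, Matrix.single, Matrix.of_apply] at h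
    simp only [sub_zero] at h
    rw [h]
    rcases eq_or_ne a i with ha | ha <;> rcases eq_or_ne b i with hb | hb <;>
      simp_all [Finset.sum_ite_eq, Finset.sum_ite_eq', eq_comm] <;> ring
  -- off-diagonal entries of Vm u
  have hVmo : ∀ a b : Fin n, a ≠ b → Vm u a b = G u a b * (u b - u a) := by
    intro a b hab
    have h := congrFun (congrFun (hV u) a) b
    simp only [Matrix.sub_apply, diagPart, Matrix.diagonal_apply_ne _ hab,
      Matrix.mul_apply, Matrix.diagonal_apply, Matrix.of_apply] at h
    simp only [sub_zero] at h
    rw [h]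
    simp [Finset.sum_ite_eq, Finset.sum_ite_eq', mul_ite, ite_mul, eq_comm]
    ring
  have key := congrFun (congrFun (h4 i u) j) j
  have hpd : pd (fun v => Vm v j j) i u = pdM Vm i u j j := rfl
  rw [hpd, key, Matrix.sub_apply, Matrix.mul_apply, Matrix.mul_apply, sub_eq_zero]
  apply Finset.sum_congr rfl
  intro k _
  rcases eq_or_ne k j with rfl | hkj
  · ring
  · rw [hVt j k (Ne.symm hkj), hVt k j hkj, hVmo j k (Ne.symm hkj), hVmo k j hkj]
    ring
end
end

section
/- With the braid group action of B_n on U_n × L_n × 𝔱 defined by the matrices B_j⁽ⁱ⁾ as above, the central element β = (β_1 ⋯ β_{n−1})ⁿ acts by simultaneous conjugation: g^β = (e^{−2πi g₃} g₁ e^{2πi g₃}, e^{−2πi g₃} g₂ e^{2πi g₃}, g₃) for all g = (g₁,g₂,g₃) ∈ U_n × L_n × 𝔱. -/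
noncomputable section

open Matrix

/-- The matrix equal to the identity except for the 2×2 block at rows/columns
`(i, i+1)`, where it is `[[a,b],[c,d]]`. -/
def blk (n : ℕ) (i : ℕ) (a b c d : ℂ) : Matrix (Fin n) (Fin n) ℂ :=
  Matrix.of fun p q =>
    if p.1 = i ∧ q.1 = i then a
    else if p.1 = i ∧ q.1 = i + 1 then b
    else if p.1 = i + 1 ∧ q.1 = i then c
    else if p.1 = i + 1 ∧ q.1 = i + 1 then d
    else if p = q then 1 else 0

/-- Entry of an `n×n` matrix with natural-number indices (junk value `0` out of
range). -/
def entry {n : ℕ} (g : Matrix (Fin n) (Fin n) ℂ) (i j : ℕ) : ℂ :=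
  if h : i < n ∧ j < n then g ⟨i, h.1⟩ ⟨j, h.2⟩ else 0

/-- `ℏ = exp(2πi[(g₃)_{i+1,i+1} − (g₃)_{i,i}])`. -/
def hbar {n : ℕ} (g₃ : Matrix (Fin n) (Fin n) ℂ) (i : ℕ) : ℂ :=
  Complex.exp (2 * Real.pi * Complex.I * (entry g₃ (i + 1) (i + 1) - entry g₃ i i))

/-- Triple in `U_n × L_n × 𝔱` (as raw matrices). -/
abbrev Trip (n : ℕ) :=
  Matrix (Fin n) (Fin n) ℂ × Matrix (Fin n) (Fin n) ℂ × Matrix (Fin n) (Fin n) ℂ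

def B1 {n : ℕ} (g : Trip n) (i : ℕ) : Matrix (Fin n) (Fin n) ℂ :=
  blk n i (entry g.1 i (i + 1)) 1 1 0

def B2 {n : ℕ} (g : Trip n) (i : ℕ) : Matrix (Fin n) (Fin n) ℂ :=
  blk n i 0 1 1 (entry g.2.1 (i + 1) i)

def B3 {n : ℕ} (g : Trip n) (i : ℕ) : Matrix (Fin n) (Fin n) ℂ :=
  blk n i (hbar g.2.2 i * entry g.1 i (i + 1)) 1 1 0

/-- Permutation matrix for the transposition `i ↔ i+1`. -/
def Pmat (n : ℕ) (i : ℕ) : Matrix (Fin n) (Fin n) ℂ := blk n i 0 1 1 0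

/-- The action of the elementary braid `β_{i+1}` (0-indexed `i`). -/
def act (n : ℕ) (i : ℕ) (g : Trip n) : Trip n :=
  ((B1 g i)⁻¹ * g.1 * B2 g i, (B2 g i)⁻¹ * g.2.1 * B3 g i,
    Pmat n i * g.2.2 * Pmat n i)

/-- Unipotent upper-triangular. -/
def IsUniUpper {n : ℕ} (M : Matrix (Fin n) (Fin n) ℂ) : Prop :=
  (∀ p, M p p = 1) ∧ ∀ p q : Fin n, q < p → M p q = 0

/-- Unipotent lower-triangular. -/
def IsUniLower {n : ℕ} (M : Matrix (Fin n) (Fin n) ℂ) : Prop :=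
  (∀ p, M p p = 1) ∧ ∀ p q : Fin n, p < q → M p q = 0

/-- Membership in `U_n × L_n × 𝔱`. -/
def InT {n : ℕ} (g : Trip n) : Prop :=
  IsUniUpper g.1 ∧ IsUniLower g.2.1 ∧ ∀ p q : Fin n, p ≠ q → g.2.2 p q = 0


/-- The action of the full row word `β_1 β_2 ⋯ β_{n−1}` (right action, applied
in reading order). -/
def actRow (n : ℕ) (g : Trip n) : Trip n :=
  (List.range (n - 1)).foldl (fun h i => act n i h) g

namespace Aux

/-- like `blk` but with diagonal `δ` off the block -/
def Dblk (n : ℕ) (i : ℕ) (a b c d : ℂ) (δ : Fin n → ℂ) : Matrix (Fin n) (Fin n) ℂ :=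
  Matrix.of fun p q =>
    if p.1 = i ∧ q.1 = i then a
    else if p.1 = i ∧ q.1 = i + 1 then b
    else if p.1 = i + 1 ∧ q.1 = i then c
    else if p.1 = i + 1 ∧ q.1 = i + 1 then d
    else if p = q then δ p else 0

lemma blk_eq_Dblk (n i : ℕ) (a b c d : ℂ) : blk n i a b c d = Dblk n i a b c d 1 := rfl

variable {n i : ℕ} {a b c d a' b' c' d' : ℂ} {δ δ' : Fin n → ℂ}

lemma Dblk_congr (h : ∀ p : Fin n, p.1 ≠ i → p.1 ≠ i + 1 → δ p = δ' p) :
    Dblk n i a b c d δ = Dblk n i a b c d δ' := by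
  ext p q
  simp only [Dblk, Matrix.of_apply]
  split_ifs with h1 h2 h3 h4 h5 <;> try rfl
  subst h5
  exact h p (fun hp => by simp [hp] at h1 h2) (fun hp => by simp [hp] at h3 h4)

lemma Dblk_mul_apply (hi : i + 1 < n) (A : Matrix (Fin n) (Fin n) ℂ) (p q : Fin n) :
    (Dblk n i a b c d δ * A) p q =
      if p.1 = i then a * A ⟨i, lt_trans (Nat.lt_succ_self i) hi⟩ q + b * A ⟨i+1, hi⟩ q
      else if p.1 = i + 1 then c * A ⟨i, lt_trans (Nat.lt_succ_self i) hi⟩ q + d * A ⟨i+1, hi⟩ q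
      else δ p * A p q := by
  set I : Fin n := ⟨i, lt_trans (Nat.lt_succ_self i) hi⟩
  set I' : Fin n := ⟨i+1, hi⟩
  rw [Matrix.mul_apply]
  by_cases hp : p.1 = i
  · have : ∀ k : Fin n, Dblk n i a b c d δ p k * A k q =
        (if k = I then a * A I q else 0) + (if k = I' then b * A I' q else 0) := by
      intro k
      by_cases hk : k = I
      · subst hk; simp [Dblk, hp, I, I']
      · by_cases hk' : k = I'
        · subst hk'; simp [Dblk, hp, I, I']
        · have h1 : ¬ k.1 = i := fun h => hk (Fin.ext h)
          have h2 : ¬ k.1 = i + 1 := fun h => hk' (Fin.ext h)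
          have h3 : ¬ p = k := fun h => h1 (h ▸ hp)
          simp [Dblk, hp, h1, h2, h3, hk, hk']
    rw [Finset.sum_congr rfl fun k _ => this k, Finset.sum_add_distrib,
      Finset.sum_ite_eq' Finset.univ I, Finset.sum_ite_eq' Finset.univ I']
    simp [hp]
  · by_cases hp' : p.1 = i + 1
    · have : ∀ k : Fin n, Dblk n i a b c d δ p k * A k q =
          (if k = I then c * A I q else 0) + (if k = I' then d * A I' q else 0) := by
        intro k
        by_cases hk : k = I
        · subst hk; simp [Dblk, hp, hp', I, I']
        · by_cases hk' : k = I'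
          · subst hk'; simp [Dblk, hp, hp', I, I']
          · have h1 : ¬ k.1 = i := fun h => hk (Fin.ext h)
            have h2 : ¬ k.1 = i + 1 := fun h => hk' (Fin.ext h)
            have h3 : ¬ p = k := fun h => h2 (h ▸ hp')
            simp [Dblk, hp, hp', h1, h2, h3, hk, hk']
      rw [Finset.sum_congr rfl fun k _ => this k, Finset.sum_add_distrib,
        Finset.sum_ite_eq' Finset.univ I, Finset.sum_ite_eq' Finset.univ I']
      simp [hp, hp']
    · have : ∀ k : Fin n, Dblk n i a b c d δ p k * A k q =
          (if k = p then δ p * A p q else 0) := by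
        intro k
        by_cases hk : k = p
        · subst hk; simp [Dblk, hp, hp']
        · have h3 : ¬ p = k := fun h => hk h.symm
          simp only [Dblk, Matrix.of_apply]
          simp only [if_neg (by simp [hp] : ¬(p.1 = i ∧ (k:Fin n).1 = i)), if_neg (by simp [hp]: ¬(p.1=i ∧ k.1=i+1)), if_neg (by simp [hp'] : ¬(p.1=i+1 ∧ k.1=i)), if_neg (by simp [hp'] : ¬(p.1=i+1∧k.1=i+1)), if_neg h3, zero_mul, if_neg hk]
      rw [Finset.sum_congr rfl fun k _ => this k, Finset.sum_ite_eq' Finset.univ p]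
      simp [hp, hp']

lemma mul_Dblk_apply (hi : i + 1 < n) (A : Matrix (Fin n) (Fin n) ℂ) (p q : Fin n) :
    (A * Dblk n i a b c d δ) p q =
      if q.1 = i then A p ⟨i, lt_trans (Nat.lt_succ_self i) hi⟩ * a + A p ⟨i+1, hi⟩ * c
      else if q.1 = i + 1 then A p ⟨i, lt_trans (Nat.lt_succ_self i) hi⟩ * b + A p ⟨i+1, hi⟩ * d
      else A p q * δ q := by
  set I : Fin n := ⟨i, lt_trans (Nat.lt_succ_self i) hi⟩
  set I' : Fin n := ⟨i+1, hi⟩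
  rw [Matrix.mul_apply]
  by_cases hq : q.1 = i
  · have : ∀ k : Fin n, A p k * Dblk n i a b c d δ k q =
        (if k = I then A I' q * 0 + A p I * a else 0) + (if k = I' then A p I' * c else 0) := by
      intro k
      by_cases hk : k = I
      · subst hk; simp [Dblk, hq, I, I']
      · by_cases hk' : k = I'
        · subst hk'; simp [Dblk, hq, I, I']
        · have h1 : ¬ k.1 = i := fun h => hk (Fin.ext h)
          have h2 : ¬ k.1 = i + 1 := fun h => hk' (Fin.ext h)
          have h3 : ¬ k = q := fun h => h1 (h ▸ hq)
          simp [Dblk, hq, h1, h2, h3, hk, hk']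
    rw [Finset.sum_congr rfl fun k _ => this k, Finset.sum_add_distrib,
      Finset.sum_ite_eq' Finset.univ I, Finset.sum_ite_eq' Finset.univ I']
    simp [hq]
  · by_cases hq' : q.1 = i + 1
    · have : ∀ k : Fin n, A p k * Dblk n i a b c d δ k q =
          (if k = I then A p I * b else 0) + (if k = I' then A p I' * d else 0) := by
        intro k
        by_cases hk : k = I
        · subst hk; simp [Dblk, hq, hq', I, I']
        · by_cases hk' : k = I'
          · subst hk'; simp [Dblk, hq, hq', I, I']
          · have h1 : ¬ k.1 = i := fun h => hk (Fin.ext h)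
            have h2 : ¬ k.1 = i + 1 := fun h => hk' (Fin.ext h)
            have h3 : ¬ k = q := fun h => h2 (h ▸ hq')
            simp [Dblk, hq, hq', h1, h2, h3, hk, hk']
      rw [Finset.sum_congr rfl fun k _ => this k, Finset.sum_add_distrib,
        Finset.sum_ite_eq' Finset.univ I, Finset.sum_ite_eq' Finset.univ I']
      simp [hq, hq']
    · have : ∀ k : Fin n, A p k * Dblk n i a b c d δ k q =
          (if k = q then A p q * δ q else 0) := by
        intro k
        by_cases hk : k = q
        · subst hk; simp [Dblk, hq, hq']
        · simp only [Dblk, Matrix.of_apply]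
          simp only [if_neg (by simp [hq] : ¬((k:Fin n).1 = i ∧ q.1 = i)), if_neg (by simp [hq']: ¬(k.1=i ∧ q.1=i+1)), if_neg (by simp [hq] : ¬(k.1=i+1 ∧ q.1=i)), if_neg (by simp [hq'] : ¬(k.1=i+1∧q.1=i+1)), if_neg hk, mul_zero]
      rw [Finset.sum_congr rfl fun k _ => this k, Finset.sum_ite_eq' Finset.univ q]
      simp [hq, hq']

end Aux

namespace Aux
variable {n i : ℕ} {a b c d a' b' c' d' : ℂ} {δ δ' : Fin n → ℂ}

lemma Dblk_apply_of (hi : i + 1 < n) (p q : Fin n) :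
    Dblk n i a b c d δ p q =
      if p.1 = i then (if q.1 = i then a else if q.1 = i+1 then b else 0)
      else if p.1 = i+1 then (if q.1 = i then c else if q.1 = i+1 then d else 0)
      else if p = q then δ p else 0 := by
  simp only [Dblk, Matrix.of_apply]
  split_ifs with h1 h2 h3 h4 h5 <;> simp_all <;> omega

lemma Dblk_mul_Dblk (hi : i + 1 < n) :
    Dblk n i a b c d δ * Dblk n i a' b' c' d' δ' =
      Dblk n i (a*a' + b*c') (a*b' + b*d') (c*a' + d*c') (c*b' + d*d') (δ * δ') := by
  ext p q
  rw [Dblk_mul_apply hi]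
  rw [Dblk_apply_of hi p q]
  by_cases hp : p.1 = i
  · simp only [hp, if_pos rfl, Dblk_apply_of hi]
    by_cases hq : q.1 = i <;> by_cases hq' : q.1 = i + 1 <;> simp [hq, hq'] <;> ring
  · by_cases hp' : p.1 = i + 1
    · simp only [hp, hp', if_neg hp, if_pos rfl, Dblk_apply_of hi]
      by_cases hq : q.1 = i <;> by_cases hq' : q.1 = i + 1 <;> simp [hq, hq'] <;> ring
    · simp only [if_neg hp, if_neg hp', Dblk_apply_of hi]
      by_cases hpq : p = q
      · subst hpq; simp [hp, hp', Pi.mul_apply]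
      · simp [hp, hp', hpq]

lemma Dblk_one (hi : i + 1 < n) : Dblk n i 1 0 0 1 (1 : Fin n → ℂ) = 1 := by
  ext p q
  rw [Dblk_apply_of hi]
  by_cases hp : p.1 = i <;> by_cases hp' : p.1 = i+1 <;> by_cases hq : q.1 = i <;>
    by_cases hq' : q.1 = i+1 <;> by_cases hpq : p = q <;>
    simp_all [Matrix.one_apply, Fin.ext_iff] <;> omega

lemma diagonal_eq_Dblk (hi : i + 1 < n) (μ : Fin n → ℂ) :
    Matrix.diagonal μ = Dblk n i (μ ⟨i, lt_trans (Nat.lt_succ_self i) hi⟩) 0 0 (μ ⟨i+1, hi⟩) μ := by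
  ext p q
  rw [Dblk_apply_of hi]
  simp only [Matrix.diagonal_apply, Fin.ext_iff]
  split_ifs <;> first
    | rfl
    | exact congrArg μ (Fin.ext (by simp only [Fin.val_mk]; omega))
    | (exfalso; omega)

lemma blk_mul_blk (hi : i + 1 < n) :
    blk n i a b c d * blk n i a' b' c' d' =
      blk n i (a*a' + b*c') (a*b' + b*d') (c*a' + d*c') (c*b' + d*d') := by
  rw [blk_eq_Dblk, blk_eq_Dblk, blk_eq_Dblk, Dblk_mul_Dblk hi, mul_one]

lemma blk_inv1 (hi : i + 1 < n) (x : ℂ) :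
    (blk n i x 1 1 0)⁻¹ = blk n i 0 1 1 (-x) := by
  apply Matrix.inv_eq_right_inv
  rw [blk_mul_blk hi, blk_eq_Dblk]
  simpa using Dblk_one hi

lemma blk_inv2 (hi : i + 1 < n) (x : ℂ) :
    (blk n i 0 1 1 x)⁻¹ = blk n i (-x) 1 1 0 := by
  apply Matrix.inv_eq_right_inv
  rw [blk_mul_blk hi, blk_eq_Dblk]
  simpa using Dblk_one hi

end Aux

namespace Aux
variable {n : ℕ}

/-- the matrix `f(g) = g₂ e^{-2πi Λ} g₁`. -/
def fmat (g : Trip n) : Matrix (Fin n) (Fin n) ℂ :=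
  g.2.1 * Matrix.diagonal (fun j => Complex.exp (-(2 * Real.pi * Complex.I) * g.2.2 j j)) * g.1

lemma entry_eq {g : Matrix (Fin n) (Fin n) ℂ} {i j : ℕ} (hi : i < n) (hj : j < n) :
    entry g i j = g ⟨i, hi⟩ ⟨j, hj⟩ := by
  simp [entry, hi, hj]

section act
variable {i : ℕ} (hi : i + 1 < n) (s : Trip n)

/-- `act` with all inverses made explicit. -/
lemma act_eq :
    act n i s =
      (Dblk n i 0 1 1 (-(s.1 ⟨i, by omega⟩ ⟨i+1, hi⟩)) 1 * s.1 *
         Dblk n i 0 1 1 (s.2.1 ⟨i+1, hi⟩ ⟨i, by omega⟩) 1,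
       Dblk n i (-(s.2.1 ⟨i+1, hi⟩ ⟨i, by omega⟩)) 1 1 0 1 * s.2.1 *
         Dblk n i (Complex.exp (2 * Real.pi * Complex.I *
             (s.2.2 ⟨i+1, hi⟩ ⟨i+1, hi⟩ - s.2.2 ⟨i, by omega⟩ ⟨i, by omega⟩)) *
           s.1 ⟨i, by omega⟩ ⟨i+1, hi⟩) 1 1 0 1,
       Dblk n i 0 1 1 0 1 * s.2.2 * Dblk n i 0 1 1 0 1) := by
  have e1 : entry s.1 i (i+1) = s.1 ⟨i, by omega⟩ ⟨i+1, hi⟩ := entry_eq (by omega) hi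
  have e2 : entry s.2.1 (i+1) i = s.2.1 ⟨i+1, hi⟩ ⟨i, by omega⟩ := entry_eq hi (by omega)
  have e3 : entry s.2.2 (i+1) (i+1) = s.2.2 ⟨i+1, hi⟩ ⟨i+1, hi⟩ := entry_eq hi hi
  have e4 : entry s.2.2 i i = s.2.2 ⟨i, by omega⟩ ⟨i, by omega⟩ := entry_eq (by omega) (by omega)
  simp only [act, B1, B2, B3, Pmat, hbar, e1, e2, e3, e4]
  rw [blk_inv1 hi, blk_inv2 hi]
  simp only [blk_eq_Dblk]

end act
end Aux
namespace Aux
variable {n : ℕ}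

section act2
variable {i : ℕ} {s : Trip n}

lemma act1_uniUpper (hi : i + 1 < n) (s : Trip n) (hs : InT s) : IsUniUpper (act n i s).1 := by
  obtain ⟨⟨hU1, hU0⟩, ⟨hL1, hL0⟩, hD⟩ := hs
  have hUz : ∀ x y : Fin n, (y : ℕ) < (x : ℕ) → s.1 x y = 0 := fun x y h => hU0 x y (Fin.lt_def.mpr h)
  have h2 := act_eq hi s
  set I : Fin n := ⟨i, by omega⟩ with hIdef
  set I' : Fin n := ⟨i+1, hi⟩ with hI'def
  have vI : (I : ℕ) = i := rfl
  have vI' : (I' : ℕ) = i + 1 := rfl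
  rw [show (act n i s).1 = Dblk n i 0 1 1 (-(s.1 I I')) 1 * s.1 * Dblk n i 0 1 1 (s.2.1 I' I) 1 by
    rw [h2]]
  constructor
  · intro p
    simp only [mul_Dblk_apply hi, Dblk_mul_apply hi, Pi.one_apply, one_mul, mul_one,
      zero_mul, mul_zero, zero_add, add_zero]
    rw [show (⟨i+1, hi⟩ : Fin n) = I' from rfl, show (⟨i, by omega⟩ : Fin n) = I from rfl]
    split_ifs
    all_goals try (simp only [hU1])
    all_goals try (simp only [hUz I' I (by omega)])
    all_goals ring
  · intro p q hqp
    have hqp' : (q : ℕ) < (p : ℕ) := Fin.lt_def.mp hqp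
    simp only [mul_Dblk_apply hi, Dblk_mul_apply hi, Pi.one_apply, one_mul, mul_one,
      zero_mul, mul_zero, zero_add, add_zero]
    rw [show (⟨i+1, hi⟩ : Fin n) = I' from rfl, show (⟨i, by omega⟩ : Fin n) = I from rfl]
    split_ifs
    all_goals try (exfalso; omega)
    all_goals try (simp only [hU1])
    all_goals try (simp only [hUz I' I (by omega)])
    all_goals try (simp only [hUz p I (by omega)])
    all_goals try (simp only [hUz p I' (by omega)])
    all_goals try (simp only [hUz I q (by omega)])
    all_goals try (simp only [hUz I' q (by omega)])
    all_goals try (simp only [hUz p q (by omega)])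
    all_goals ring

lemma act2_uniLower (hi : i + 1 < n) (s : Trip n) (hs : InT s) : IsUniLower (act n i s).2.1 := by
  obtain ⟨⟨hU1, hU0⟩, ⟨hL1, hL0⟩, hD⟩ := hs
  have hLz : ∀ x y : Fin n, (x : ℕ) < (y : ℕ) → s.2.1 x y = 0 :=
    fun x y h => hL0 x y (Fin.lt_def.mpr h)
  have h2 := act_eq hi s
  set I : Fin n := ⟨i, by omega⟩ with hIdef
  set I' : Fin n := ⟨i+1, hi⟩ with hI'def
  have vI : (I : ℕ) = i := rfl
  have vI' : (I' : ℕ) = i + 1 := rfl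
  rw [show (act n i s).2.1 = Dblk n i (-(s.2.1 I' I)) 1 1 0 1 * s.2.1 *
      Dblk n i (Complex.exp (2 * Real.pi * Complex.I * (s.2.2 I' I' - s.2.2 I I)) *
        s.1 I I') 1 1 0 1 by rw [h2]]
  constructor
  · intro p
    simp only [mul_Dblk_apply hi, Dblk_mul_apply hi, Pi.one_apply, one_mul, mul_one,
      zero_mul, mul_zero, zero_add, add_zero]
    rw [show (⟨i+1, hi⟩ : Fin n) = I' from rfl, show (⟨i, by omega⟩ : Fin n) = I from rfl]
    split_ifs
    all_goals try (simp only [hL1])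
    all_goals try (simp only [hLz I I' (by omega)])
    all_goals ring
  · intro p q hpq
    have hpq' : (p : ℕ) < (q : ℕ) := Fin.lt_def.mp hpq
    simp only [mul_Dblk_apply hi, Dblk_mul_apply hi, Pi.one_apply, one_mul, mul_one,
      zero_mul, mul_zero, zero_add, add_zero]
    rw [show (⟨i+1, hi⟩ : Fin n) = I' from rfl, show (⟨i, by omega⟩ : Fin n) = I from rfl]
    split_ifs
    all_goals try (exfalso; omega)
    all_goals try (simp only [hL1])
    all_goals try (simp only [hLz I I' (by omega)])
    all_goals try (simp only [hLz I p (by omega)])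
    all_goals try (simp only [hLz I' p (by omega)])
    all_goals try (simp only [hLz p I (by omega)])
    all_goals try (simp only [hLz p I' (by omega)])
    all_goals try (simp only [hLz I q (by omega)])
    all_goals try (simp only [hLz I' q (by omega)])
    all_goals try (simp only [hLz p q (by omega)])
    all_goals ring

lemma act3_eq (hi : i + 1 < n) (s : Trip n) (hs : InT s) :
    (act n i s).2.2 = Matrix.diagonal (fun j : Fin n =>
      if (j : ℕ) = i then s.2.2 ⟨i+1, hi⟩ ⟨i+1, hi⟩
      else if (j : ℕ) = i + 1 then s.2.2 ⟨i, by omega⟩ ⟨i, by omega⟩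
      else s.2.2 j j) := by
  obtain ⟨⟨hU1, hU0⟩, ⟨hL1, hL0⟩, hD⟩ := hs
  have h2 := act_eq hi s
  set I : Fin n := ⟨i, by omega⟩ with hIdef
  set I' : Fin n := ⟨i+1, hi⟩ with hI'def
  have vI : (I : ℕ) = i := rfl
  have vI' : (I' : ℕ) = i + 1 := rfl
  have hDz : ∀ x y : Fin n, (x : ℕ) ≠ (y : ℕ) → s.2.2 x y = 0 :=
    fun x y h => hD x y (fun he => h (by rw [he]))
  rw [show (act n i s).2.2 = Dblk n i 0 1 1 0 1 * s.2.2 * Dblk n i 0 1 1 0 1 by rw [h2]]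
  ext p q
  simp only [mul_Dblk_apply hi, Dblk_mul_apply hi, Pi.one_apply, one_mul, mul_one,
    zero_mul, mul_zero, zero_add, add_zero, Matrix.diagonal_apply]
  rw [show (⟨i+1, hi⟩ : Fin n) = I' from rfl, show (⟨i, by omega⟩ : Fin n) = I from rfl]
  simp only [Fin.ext_iff]
  split_ifs
  all_goals try rfl
  all_goals try (exfalso; omega)
  all_goals try (simp only [hDz I I' (by omega)])
  all_goals try (simp only [hDz I' I (by omega)])
  all_goals try (simp only [hDz I p (by omega)])
  all_goals try (simp only [hDz I' p (by omega)])
  all_goals try (simp only [hDz p I (by omega)])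
  all_goals try (simp only [hDz p I' (by omega)])
  all_goals try (simp only [hDz I q (by omega)])
  all_goals try (simp only [hDz I' q (by omega)])
  all_goals try (simp only [hDz p q (by omega)])
  all_goals try rfl
  all_goals try (exact congrArg₂ s.2.2 (Fin.ext (by omega)) (Fin.ext (by omega)))

lemma act_InT (hi : i + 1 < n) (s : Trip n) (hs : InT s) : InT (act n i s) := by
  refine ⟨act1_uniUpper hi s hs, act2_uniLower hi s hs, ?_⟩
  rw [act3_eq hi s hs]
  intro p q hpq
  exact Matrix.diagonal_apply_ne _ hpq

lemma act_col (hi : i + 1 < n) (s : Trip n) (hs : InT s) (p : Fin n) (hp : i + 1 < (p : ℕ)) :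
    (act n i s).2.1 p ⟨i+1, hi⟩ = s.2.1 p ⟨i, by omega⟩ := by
  have h2 := act_eq hi s
  set I : Fin n := ⟨i, by omega⟩ with hIdef
  set I' : Fin n := ⟨i+1, hi⟩ with hI'def
  have vI : (I : ℕ) = i := rfl
  have vI' : (I' : ℕ) = i + 1 := rfl
  rw [show (act n i s).2.1 = Dblk n i (-(s.2.1 I' I)) 1 1 0 1 * s.2.1 *
      Dblk n i (Complex.exp (2 * Real.pi * Complex.I * (s.2.2 I' I' - s.2.2 I I)) *
        s.1 I I') 1 1 0 1 by rw [h2]]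
  simp only [mul_Dblk_apply hi, Dblk_mul_apply hi, Pi.one_apply, one_mul, mul_one,
    zero_mul, mul_zero, zero_add, add_zero]
  rw [show (⟨i+1, hi⟩ : Fin n) = I' from rfl, show (⟨i, by omega⟩ : Fin n) = I from rfl]
  split_ifs
  all_goals try (exfalso; omega)
  all_goals ring

end act2
end Aux
namespace Aux
variable {n : ℕ}

lemma Dblk_ext {i : ℕ} {a b c d a' b' c' d' : ℂ} {δ δ' : Fin n → ℂ}
    (h1 : a = a') (h2 : b = b') (h3 : c = c') (h4 : d = d') (h5 : δ = δ') :
    Dblk n i a b c d δ = Dblk n i a' b' c' d' δ' := by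
  subst h1; subst h2; subst h3; subst h4; subst h5; rfl

section actf
variable {i : ℕ}

lemma act_f (hi : i + 1 < n) (s : Trip n) (hs : InT s) :
    Dblk n i 0 1 1 (s.2.1 ⟨i+1, hi⟩ ⟨i, by omega⟩) 1 * fmat (act n i s) =
      fmat s * Dblk n i 0 1 1 (s.2.1 ⟨i+1, hi⟩ ⟨i, by omega⟩) 1 := by
  set I : Fin n := ⟨i, by omega⟩ with hIdef
  set I' : Fin n := ⟨i+1, hi⟩ with hI'def
  have vI : (I : ℕ) = i := rfl
  have vI' : (I' : ℕ) = i + 1 := rfl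
  set a : ℂ := s.1 I I' with ha
  set c : ℂ := s.2.1 I' I with hc
  set hb : ℂ := Complex.exp (2 * Real.pi * Complex.I * (s.2.2 I' I' - s.2.2 I I)) with hhb
  set ε : ℂ := Complex.exp (-(2 * Real.pi * Complex.I) * s.2.2 I I) with hε
  set ε' : ℂ := Complex.exp (-(2 * Real.pi * Complex.I) * s.2.2 I' I') with hε'
  have hee : hb * ε' = ε := by
    rw [hhb, hε', hε, ← Complex.exp_add]
    congr 1
    ring
  have hd : (fun j : Fin n => Complex.exp (-(2 * Real.pi * Complex.I) * (act n i s).2.2 j j)) =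
      fun j : Fin n => Complex.exp (-(2 * Real.pi * Complex.I) *
        (if (j : ℕ) = i then s.2.2 I' I' else if (j : ℕ) = i + 1 then s.2.2 I I
          else s.2.2 j j)) := by
    funext j
    rw [act3_eq hi s hs, Matrix.diagonal_apply_eq]
  have hEms' : Matrix.diagonal
        (fun j : Fin n => Complex.exp (-(2 * Real.pi * Complex.I) * (act n i s).2.2 j j)) =
      Dblk n i ε' 0 0 ε
        (fun j : Fin n => Complex.exp (-(2 * Real.pi * Complex.I) * s.2.2 j j)) := by
    rw [hd, diagonal_eq_Dblk hi]
    rw [Dblk_congr (δ' := fun j : Fin n => Complex.exp (-(2 * Real.pi * Complex.I) * s.2.2 j j))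
      (by intro p hp hp'; simp only [hp, hp', if_false])]
    exact Dblk_ext (by simp [hε']) rfl rfl (by simp [hε]) rfl
  have key : Dblk n i (hb * a) 1 1 0 1 *
        Matrix.diagonal (fun j : Fin n =>
          Complex.exp (-(2 * Real.pi * Complex.I) * (act n i s).2.2 j j)) *
        Dblk n i 0 1 1 (-a) 1 =
      Matrix.diagonal (fun j : Fin n =>
        Complex.exp (-(2 * Real.pi * Complex.I) * s.2.2 j j)) := by
    rw [hEms', Dblk_mul_Dblk hi, Dblk_mul_Dblk hi,
      diagonal_eq_Dblk hi (fun j : Fin n => Complex.exp (-(2 * Real.pi * Complex.I) * s.2.2 j j))]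
    refine Dblk_ext ?_ ?_ ?_ ?_ ?_
    · ring
    · linear_combination a * hee
    · ring
    · ring
    · funext j; simp
  have hfa : fmat (act n i s) =
      (Dblk n i (-c) 1 1 0 1 * s.2.1 * Dblk n i (hb * a) 1 1 0 1) *
        Matrix.diagonal (fun j : Fin n =>
          Complex.exp (-(2 * Real.pi * Complex.I) * (act n i s).2.2 j j)) *
        (Dblk n i 0 1 1 (-a) 1 * s.1 * Dblk n i 0 1 1 c 1) := by
    rw [fmat]
    congr 2
    · rw [act_eq hi]
    · rw [show (act n i s).1 = Dblk n i 0 1 1 (-a) 1 * s.1 * Dblk n i 0 1 1 c 1 by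
        rw [act_eq hi]]
  have hB2inv : Dblk n i 0 1 1 c 1 * Dblk n i (-c) 1 1 0 1 = 1 := by
    rw [Dblk_mul_Dblk hi, ← Dblk_one (n := n) hi]
    exact Dblk_ext (by ring) (by ring) (by ring) (by ring) (by funext j; simp)
  rw [hfa, fmat]
  calc Dblk n i 0 1 1 c 1 *
        (Dblk n i (-c) 1 1 0 1 * s.2.1 * Dblk n i (hb * a) 1 1 0 1 *
          Matrix.diagonal (fun j : Fin n =>
            Complex.exp (-(2 * Real.pi * Complex.I) * (act n i s).2.2 j j)) *
          (Dblk n i 0 1 1 (-a) 1 * s.1 * Dblk n i 0 1 1 c 1))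
      = Dblk n i 0 1 1 c 1 * Dblk n i (-c) 1 1 0 1 * s.2.1 *
          (Dblk n i (hb * a) 1 1 0 1 *
            Matrix.diagonal (fun j : Fin n =>
              Complex.exp (-(2 * Real.pi * Complex.I) * (act n i s).2.2 j j)) *
            Dblk n i 0 1 1 (-a) 1) * s.1 * Dblk n i 0 1 1 c 1 := by
        simp only [Matrix.mul_assoc]
    _ = s.2.1 * Matrix.diagonal (fun j : Fin n =>
            Complex.exp (-(2 * Real.pi * Complex.I) * s.2.2 j j)) * s.1 *
          Dblk n i 0 1 1 c 1 := by rw [hB2inv, key, Matrix.one_mul]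

end actf
end Aux
namespace Aux
variable {n : ℕ}

def Vmat (n k : ℕ) (w : Fin n → ℂ) : Matrix (Fin n) (Fin n) ℂ :=
  Matrix.of fun p q =>
    if (q : ℕ) < k then (if (p : ℕ) = (q : ℕ) + 1 then 1 else 0)
    else if (q : ℕ) = k then w p
    else if p = q then 1 else 0

lemma Vmat_zero (w : Fin n → ℂ) (hw : ∀ p : Fin n, w p = if (p : ℕ) = 0 then 1 else 0) :
    Vmat n 0 w = 1 := by
  ext p q
  simp only [Vmat, Matrix.of_apply, hw, Matrix.one_apply, Fin.ext_iff]
  split_ifs <;> first | rfl | (exfalso; omega)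

lemma Vmat_congr {k : ℕ} {w w' : Fin n → ℂ} (h : ∀ p, w p = w' p) :
    Vmat n k w = Vmat n k w' := by
  ext p q; simp only [Vmat, Matrix.of_apply, h]

lemma Vmat_step {k : ℕ} (hk : k + 1 < n) (w w' : Fin n → ℂ) (cc : ℂ)
    (hw' : ∀ p : Fin n, w' p = w p + (if (p : ℕ) = k + 1 then cc else 0)) :
    Vmat n k w * Dblk n k 0 1 1 cc 1 = Vmat n (k + 1) w' := by
  ext p q
  rw [mul_Dblk_apply hk]
  simp only [Vmat, Matrix.of_apply, hw', Fin.ext_iff, Fin.val_mk, Pi.one_apply]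
  split_ifs <;> first | rfl | ring1 | (exfalso; omega)

/-- state after the first `k` elementary steps of a row -/
def stRow (h : Trip n) (k : ℕ) : Trip n :=
  (List.range k).foldl (fun s i => act n i s) h

lemma stRow_succ (h : Trip n) (k : ℕ) : stRow h (k + 1) = act n k (stRow h k) := by
  simp [stRow, List.range_succ]

lemma stRow_zero (h : Trip n) : stRow h 0 = h := rfl

lemma actRow_eq_stRow (h : Trip n) : actRow n h = stRow h (n - 1) := rfl

lemma row_ind [NeZero n] (hn : 2 ≤ n) (h : Trip n) (hh : InT h) (k : ℕ) (hk : k ≤ n - 1) :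
    InT (stRow h k) ∧
    (stRow h k).2.2 = Matrix.diagonal (fun j : Fin n =>
      if (j : ℕ) < k then h.2.2 (j + 1) (j + 1)
      else if (j : ℕ) = k then h.2.2 0 0
      else h.2.2 j j) ∧
    (∀ p : Fin n, k < (p : ℕ) →
      (stRow h k).2.1 p ⟨k, by omega⟩ = h.2.1 p 0) ∧
    Vmat n k (fun p => if (p : ℕ) ≤ k then h.2.1 p 0 else 0) * fmat (stRow h k)
      = fmat h * Vmat n k (fun p => if (p : ℕ) ≤ k then h.2.1 p 0 else 0) := by
  have hv1 : ((1 : Fin n) : ℕ) = 1 := by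
    rw [Fin.val_one']
    exact Nat.mod_eq_of_lt (by omega)
  have hvadd : ∀ (j : Fin n), (j : ℕ) + 1 < n → ((j + 1 : Fin n) : ℕ) = (j : ℕ) + 1 := by
    intro j hj
    rw [Fin.val_add_eq_of_add_lt (by rw [hv1]; omega), hv1]
  have hv0 : ((0 : Fin n) : ℕ) = 0 := rfl
  induction k with
  | zero =>
    simp only [stRow_zero]
    refine ⟨hh, ?_, ?_, ?_⟩
    · ext p q
      by_cases hpq : p = q
      · subst hpq
        rw [Matrix.diagonal_apply_eq]
        rw [if_neg (Nat.not_lt_zero _)]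
        by_cases hp0 : (p : ℕ) = 0
        · rw [if_pos hp0]
          exact congrArg₂ h.2.2 (Fin.ext (by omega)) (Fin.ext (by omega))
        · rw [if_neg hp0]
      · rw [Matrix.diagonal_apply_ne _ hpq]
        exact hh.2.2 p q hpq
    · intro p hp
      exact congrArg₂ h.2.1 rfl (Fin.ext (by rw [hv0]))
    · have hV0 : Vmat n 0 (fun p => if (p : ℕ) ≤ 0 then h.2.1 p 0 else 0) = 1 := by
        apply Vmat_zero
        intro p
        by_cases hp0 : (p : ℕ) = 0
        · rw [if_pos (by omega), if_pos hp0]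
          have hp : p = 0 := Fin.ext (by rw [hp0, hv0])
          rw [hp, hh.2.1.1 0]
        · rw [if_neg (by omega), if_neg hp0]
      rw [hV0, Matrix.one_mul, Matrix.mul_one]
  | succ k ih =>
    have hkn : k + 1 < n := by omega
    obtain ⟨sInT, sdiag, scol, sV⟩ := ih (by omega)
    set s : Trip n := stRow h k with hs
    have hstep : stRow h (k + 1) = act n k s := stRow_succ h k
    have hcc : s.2.1 ⟨k + 1, hkn⟩ ⟨k, by omega⟩ = h.2.1 ⟨k + 1, hkn⟩ 0 :=
      scol ⟨k + 1, hkn⟩ (by simp only [Fin.val_mk]; omega)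
    refine ⟨?_, ?_, ?_, ?_⟩
    · rw [hstep]; exact act_InT hkn s sInT
    · rw [hstep, act3_eq hkn s sInT]
      refine congrArg Matrix.diagonal (funext fun j => ?_)
      have e1 : s.2.2 ⟨k + 1, hkn⟩ ⟨k + 1, hkn⟩ = h.2.2 ⟨k + 1, hkn⟩ ⟨k + 1, hkn⟩ := by
        rw [sdiag, Matrix.diagonal_apply_eq]
        simp only [Fin.val_mk]
        rw [if_neg (by omega), if_neg (by omega)]
      have e2 : s.2.2 ⟨k, by omega⟩ ⟨k, by omega⟩ = h.2.2 0 0 := by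
        rw [sdiag, Matrix.diagonal_apply_eq]
        simp only [Fin.val_mk]
        rw [if_neg (by omega)]
        simp
      by_cases h1 : (j : ℕ) = k
      · rw [if_pos h1, e1, if_pos (by omega)]
        exact congrArg₂ h.2.2
          (Fin.ext (by rw [hvadd j (by omega)]; simp only [Fin.val_mk]; omega))
          (Fin.ext (by rw [hvadd j (by omega)]; simp only [Fin.val_mk]; omega))
      · rw [if_neg h1]
        by_cases h2 : (j : ℕ) = k + 1
        · rw [if_pos h2, e2, if_neg (by omega), if_pos h2]
        · rw [if_neg h2, sdiag, Matrix.diagonal_apply_eq]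
          by_cases h3 : (j : ℕ) < k
          · rw [if_pos h3, if_pos (by omega)]
          · rw [if_neg h3, if_neg (by omega), if_neg (by omega), if_neg (by omega)]
    · intro p hp
      rw [hstep]
      have hac := act_col hkn s sInT p (by omega)
      rw [show (⟨k + 1, by omega⟩ : Fin n) = ⟨k + 1, hkn⟩ from rfl, hac]
      exact scol p (by omega)
    · have hVs : Vmat n k (fun p => if (p : ℕ) ≤ k then h.2.1 p 0 else 0) *
          Dblk n k 0 1 1 (s.2.1 ⟨k + 1, hkn⟩ ⟨k, by omega⟩) 1 =
          Vmat n (k + 1) (fun p => if (p : ℕ) ≤ k + 1 then h.2.1 p 0 else 0) := by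
        apply Vmat_step hkn
        intro p
        by_cases h1 : (p : ℕ) = k + 1
        · rw [if_pos (by omega), if_neg (by omega), if_pos h1, hcc, zero_add]
          exact congrArg₂ h.2.1 (Fin.ext (by simp only [Fin.val_mk]; omega)) rfl
        · by_cases h2 : (p : ℕ) ≤ k
          · rw [if_pos (by omega), if_pos h2, if_neg h1, add_zero]
          · rw [if_neg (by omega), if_neg (by omega), if_neg h1, add_zero]
      calc Vmat n (k + 1) (fun p => if (p : ℕ) ≤ k + 1 then h.2.1 p 0 else 0) *
            fmat (stRow h (k + 1))
          = Vmat n k (fun p => if (p : ℕ) ≤ k then h.2.1 p 0 else 0) *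
              (Dblk n k 0 1 1 (s.2.1 ⟨k + 1, hkn⟩ ⟨k, by omega⟩) 1 * fmat (act n k s)) := by
            rw [← hVs, hstep, Matrix.mul_assoc]
        _ = Vmat n k (fun p => if (p : ℕ) ≤ k then h.2.1 p 0 else 0) *
              (fmat s * Dblk n k 0 1 1 (s.2.1 ⟨k + 1, hkn⟩ ⟨k, by omega⟩) 1) := by
            rw [act_f hkn s sInT]
        _ = (Vmat n k (fun p => if (p : ℕ) ≤ k then h.2.1 p 0 else 0) * fmat s) *
              Dblk n k 0 1 1 (s.2.1 ⟨k + 1, hkn⟩ ⟨k, by omega⟩) 1 := by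
            rw [Matrix.mul_assoc]
        _ = fmat h * Vmat n (k + 1) (fun p => if (p : ℕ) ≤ k + 1 then h.2.1 p 0 else 0) := by
            rw [sV, Matrix.mul_assoc, hVs]

lemma rowLemma [NeZero n] (hn : 2 ≤ n) (h : Trip n) (hh : InT h) :
    InT (actRow n h) ∧
    (actRow n h).2.2 = Matrix.diagonal (fun j : Fin n => h.2.2 (j + 1) (j + 1)) ∧
    Vmat n (n - 1) (fun p => h.2.1 p 0) * fmat (actRow n h)
      = fmat h * Vmat n (n - 1) (fun p => h.2.1 p 0) := by
  have hv1 : ((1 : Fin n) : ℕ) = 1 := by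
    rw [Fin.val_one']
    exact Nat.mod_eq_of_lt (by omega)
  obtain ⟨hInT, hdiag, _, hV⟩ := row_ind hn h hh (n - 1) le_rfl
  rw [actRow_eq_stRow]
  refine ⟨hInT, ?_, ?_⟩
  · rw [hdiag]
    refine congrArg Matrix.diagonal (funext fun j => ?_)
    by_cases h1 : (j : ℕ) < n - 1
    · rw [if_pos h1]
    · rw [if_neg h1, if_pos (by omega)]
      have : ((j + 1 : Fin n) : ℕ) = 0 := by
        rw [Fin.add_def, hv1]
        show ((j : ℕ) + 1) % n = 0
        rw [show (j : ℕ) + 1 = n by omega, Nat.mod_self]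
      exact congrArg₂ h.2.2 (Fin.ext (by rw [this]; rfl)) (Fin.ext (by rw [this]; rfl))
  · rw [show Vmat n (n - 1) (fun p => h.2.1 p 0)
        = Vmat n (n - 1) (fun p => if (p : ℕ) ≤ n - 1 then h.2.1 p 0 else 0) from
      Vmat_congr (fun p => by rw [if_pos (by omega)])]
    exact hV

end Aux
namespace Aux
open Fin.CommRing
variable {n : ℕ}

def Qmat [NeZero n] (g : Trip n) (r : ℕ) : Matrix (Fin n) (Fin n) ℂ :=
  Matrix.of fun p q =>
    if (q : ℕ) < n - r then (if p = q + (r : Fin n) then 1 else 0)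
    else Complex.exp (2 * Real.pi * Complex.I * g.2.2 (q + (r : Fin n)) (q + (r : Fin n))) *
      fmat g p (q + (r : Fin n))

lemma Qmat_zero [NeZero n] (g : Trip n) : Qmat g 0 = 1 := by
  ext p q
  have h0 : ((0 : ℕ) : Fin n) = 0 := Nat.cast_zero
  simp only [Qmat, Matrix.of_apply, h0, add_zero, Nat.sub_zero, q.isLt, if_true,
    Matrix.one_apply]

lemma col0 [NeZero n] (hn : 2 ≤ n) (g : Trip n) (r : ℕ) (hrn : r < n)
    (G : Trip n) (GInT : InT G)
    (Gdiag : G.2.2 = Matrix.diagonal (fun j : Fin n =>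
      g.2.2 (j + (r : Fin n)) (j + (r : Fin n)))) (p : Fin n) :
    G.2.1 p 0 = Complex.exp (2 * Real.pi * Complex.I * g.2.2 (r : Fin n) (r : Fin n)) *
      fmat G p 0 := by
  have hcol : ∀ k : Fin n, G.1 k 0 = if k = 0 then 1 else 0 := by
    intro k
    by_cases hk : k = 0
    · subst hk; rw [if_pos rfl, GInT.1.1 0]
    · rw [if_neg hk]
      refine GInT.1.2 k 0 (Fin.lt_def.mpr ?_)
      have := Fin.val_ne_of_ne hk
      simp only [Fin.val_zero] at this ⊢
      omega
  have hf : fmat G p 0 = G.2.1 p 0 *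
      Complex.exp (-(2 * Real.pi * Complex.I) * G.2.2 0 0) := by
    rw [fmat, Matrix.mul_apply]
    have : ∀ k : Fin n, (G.2.1 * Matrix.diagonal
          (fun j => Complex.exp (-(2 * Real.pi * Complex.I) * G.2.2 j j))) p k * G.1 k 0 =
        if k = (0 : Fin n) then (G.2.1 * Matrix.diagonal
          (fun j => Complex.exp (-(2 * Real.pi * Complex.I) * G.2.2 j j))) p 0 * 1 else 0 := by
      intro k
      rw [hcol k]
      by_cases hk : k = 0
      · subst hk; simp
      · simp [hk]
    rw [Finset.sum_congr rfl fun k _ => this k, Finset.sum_ite_eq' Finset.univ (0 : Fin n)]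
    simp [Matrix.mul_diagonal]
  have h00 : G.2.2 0 0 = g.2.2 (r : Fin n) (r : Fin n) := by
    rw [Gdiag, Matrix.diagonal_apply_eq, zero_add]
  have hEE : Complex.exp (2 * Real.pi * Complex.I * g.2.2 (r : Fin n) (r : Fin n)) *
      Complex.exp (-(2 * Real.pi * Complex.I) * g.2.2 (r : Fin n) (r : Fin n)) = 1 := by
    rw [← Complex.exp_add, show 2 * (Real.pi : ℂ) * Complex.I * g.2.2 (r : Fin n) (r : Fin n) +
      -(2 * Real.pi * Complex.I) * g.2.2 (r : Fin n) (r : Fin n) = 0 by ring, Complex.exp_zero]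
  rw [hf, h00]
  linear_combination (-(G.2.1 p 0)) * hEE

lemma Qstep [NeZero n] (hn : 2 ≤ n) (g : Trip n) (r : ℕ) (hrn : r < n)
    (G : Trip n) (GInT : InT G)
    (Gdiag : G.2.2 = Matrix.diagonal (fun j : Fin n =>
      g.2.2 (j + (r : Fin n)) (j + (r : Fin n))))
    (GQ : Qmat g r * fmat G = fmat g * Qmat g r) :
    Qmat g r * Vmat n (n - 1) (fun p => G.2.1 p 0) = Qmat g (r + 1) := by
  have hv1 : ((1 : Fin n) : ℕ) = 1 := by
    rw [Fin.val_one']; exact Nat.mod_eq_of_lt (by omega)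
  have hvr : ((r : Fin n) : ℕ) = r := by
    rw [Fin.val_natCast]; exact Nat.mod_eq_of_lt hrn
  ext p q
  rw [Matrix.mul_apply]
  by_cases hq : (q : ℕ) < n - 1
  · -- column q < n-1 : shift
    set t : Fin n := q + 1 with ht
    have hvt : (t : ℕ) = (q : ℕ) + 1 := by
      rw [ht, Fin.val_add_eq_of_add_lt (by rw [hv1]; omega), hv1]
    have hsum : ∀ k : Fin n, Qmat g r p k * Vmat n (n - 1) (fun p' => G.2.1 p' 0) k q =
        if k = t then Qmat g r p t * 1 else 0 := by
      intro k
      simp only [Vmat, Matrix.of_apply, if_pos hq]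
      by_cases hk : k = t
      · subst hk; rw [if_pos (by omega), mul_one, if_pos rfl]
      · rw [if_neg (by rw [Fin.ext_iff, hvt] at hk; omega), mul_zero, if_neg hk]
    rw [Finset.sum_congr rfl fun k _ => hsum k, Finset.sum_ite_eq' Finset.univ t]
    have hidx : t + (r : Fin n) = q + ((r + 1 : ℕ) : Fin n) := by
      rw [ht, Nat.cast_add, Nat.cast_one]
      ring
    have hiff : ((t : ℕ) < n - r) ↔ ((q : ℕ) < n - (r + 1)) := by rw [hvt]; omega
    simp only [Finset.mem_univ, if_true, mul_one, Qmat, Matrix.of_apply, hidx, hiff]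
  · -- column q = n-1 : the interesting column
    have hq' : (q : ℕ) = n - 1 := by omega
    have hsum : ∀ k : Fin n, Qmat g r p k * Vmat n (n - 1) (fun p' => G.2.1 p' 0) k q =
        Complex.exp (2 * Real.pi * Complex.I * g.2.2 (r : Fin n) (r : Fin n)) *
          (Qmat g r p k * fmat G k 0) := by
      intro k
      simp only [Vmat, Matrix.of_apply, if_neg hq, if_pos hq']
      rw [col0 hn g r hrn G GInT Gdiag k]
      ring
    rw [Finset.sum_congr rfl fun k _ => hsum k, ← Finset.mul_sum]
    have hmm : (∑ k : Fin n, Qmat g r p k * fmat G k 0) = (Qmat g r * fmat G) p 0 := by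
      rw [Matrix.mul_apply]
    rw [hmm, GQ, Matrix.mul_apply]
    have hQ0 : ∀ k : Fin n, Qmat g r k 0 = if k = ((r : ℕ) : Fin n) then 1 else 0 := by
      intro k
      simp only [Qmat, Matrix.of_apply]
      rw [if_pos (by simp only [Fin.val_zero]; omega)]
      simp only [zero_add]
    have hss : ∀ k : Fin n, fmat g p k * Qmat g r k 0 =
        if k = ((r : ℕ) : Fin n) then fmat g p ((r : ℕ) : Fin n) * 1 else 0 := by
      intro k
      rw [hQ0 k]
      by_cases hk : k = ((r : ℕ) : Fin n)
      · subst hk; simp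
      · simp [hk]
    rw [Finset.sum_congr rfl fun k _ => hss k, Finset.sum_ite_eq' Finset.univ ((r : ℕ) : Fin n)]
    simp only [Finset.mem_univ, if_true, mul_one]
    have hidx : q + ((r + 1 : ℕ) : Fin n) = ((r : ℕ) : Fin n) := by
      apply Fin.ext
      show ((q : ℕ) + (r + 1) % n) % n = r % n
      rw [hq']
      by_cases hreq : r + 1 = n
      · rw [hreq, Nat.mod_self, Nat.add_zero, Nat.mod_eq_of_lt (by omega),
          Nat.mod_eq_of_lt hrn]
        omega
      · rw [Nat.mod_eq_of_lt (show r + 1 < n by omega),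
          show n - 1 + (r + 1) = n + r by omega, Nat.add_mod_left]
    simp only [Qmat, Matrix.of_apply, hidx]
    rw [if_neg (by omega)]

lemma outer [NeZero n] (hn : 2 ≤ n) (g : Trip n) (hg : InT g) (r : ℕ) (hr : r ≤ n) :
    InT ((actRow n)^[r] g) ∧
    ((actRow n)^[r] g).2.2 = Matrix.diagonal (fun j : Fin n =>
      g.2.2 (j + (r : Fin n)) (j + (r : Fin n))) ∧
    Qmat g r * fmat ((actRow n)^[r] g) = fmat g * Qmat g r := by
  induction r with
  | zero =>
    refine ⟨by simpa using hg, ?_, ?_⟩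
    · simp only [Function.iterate_zero, id_eq, Nat.cast_zero, add_zero]
      ext p q
      by_cases hpq : p = q
      · subst hpq; rw [Matrix.diagonal_apply_eq]
      · rw [Matrix.diagonal_apply_ne _ hpq]; exact hg.2.2 p q hpq
    · simp [Qmat_zero]
  | succ r ih =>
    have hrn : r < n := by omega
    obtain ⟨GInT, Gdiag, GQ⟩ := ih (by omega)
    set G : Trip n := (actRow n)^[r] g with hG
    have hit : (actRow n)^[r + 1] g = actRow n G := Function.iterate_succ_apply' _ _ _
    obtain ⟨rInT, rdiag, rV⟩ := rowLemma hn G GInT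
    refine ⟨by rw [hit]; exact rInT, ?_, ?_⟩
    · rw [hit, rdiag]
      have hfun : (fun j : Fin n => G.2.2 (j + 1) (j + 1)) =
          fun j : Fin n => g.2.2 (j + ((r + 1 : ℕ) : Fin n)) (j + ((r + 1 : ℕ) : Fin n)) := by
        funext j
        rw [Gdiag, Matrix.diagonal_apply_eq]
        have : j + 1 + ((r : ℕ) : Fin n) = j + ((r + 1 : ℕ) : Fin n) := by
          rw [Nat.cast_add, Nat.cast_one]; ring
        rw [this]
      rw [hfun]
    · have hQs := Qstep hn g r hrn G GInT Gdiag GQ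
      calc Qmat g (r + 1) * fmat ((actRow n)^[r + 1] g)
          = Qmat g r * (Vmat n (n - 1) (fun p => G.2.1 p 0) * fmat (actRow n G)) := by
            rw [← hQs, hit, Matrix.mul_assoc]
        _ = Qmat g r * (fmat G * Vmat n (n - 1) (fun p => G.2.1 p 0)) := by rw [rV]
        _ = (Qmat g r * fmat G) * Vmat n (n - 1) (fun p => G.2.1 p 0) := by
            rw [← Matrix.mul_assoc]
        _ = fmat g * Qmat g (r + 1) := by rw [GQ, Matrix.mul_assoc, hQs]

end Aux
namespace Aux
variable {n : ℕ}

lemma uniLower_conj {M : Matrix (Fin n) (Fin n) ℂ} (hM : IsUniLower M)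
    (d e : Fin n → ℂ) (hde : ∀ j, d j * e j = 1) :
    IsUniLower (Matrix.diagonal d * M * Matrix.diagonal e) := by
  constructor
  · intro p
    rw [Matrix.mul_diagonal, Matrix.diagonal_mul, hM.1 p]
    rw [show d p * 1 * e p = d p * e p by ring, hde p]
  · intro p q hpq
    rw [Matrix.mul_diagonal, Matrix.diagonal_mul, hM.2 p q hpq]
    ring

lemma uniUpper_conj {M : Matrix (Fin n) (Fin n) ℂ} (hM : IsUniUpper M)
    (d e : Fin n → ℂ) (hde : ∀ j, d j * e j = 1) :
    IsUniUpper (Matrix.diagonal d * M * Matrix.diagonal e) := by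
  constructor
  · intro p
    rw [Matrix.mul_diagonal, Matrix.diagonal_mul, hM.1 p]
    rw [show d p * 1 * e p = d p * e p by ring, hde p]
  · intro p q hpq
    rw [Matrix.mul_diagonal, Matrix.diagonal_mul, hM.2 p q hpq]
    ring

lemma LDU_unique {L L' U U' : Matrix (Fin n) (Fin n) ℂ} {dd : Fin n → ℂ}
    (hd : ∀ j, dd j ≠ 0) (hL : IsUniLower L) (hL' : IsUniLower L')
    (hU : IsUniUpper U) (hU' : IsUniUpper U')
    (heq : L * Matrix.diagonal dd * U = L' * Matrix.diagonal dd * U') :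
    L = L' ∧ U = U' := by
  have hent : ∀ p q : Fin n,
      (∑ j, L p j * dd j * U j q) = ∑ j, L' p j * dd j * U' j q := by
    intro p q
    have e1 : (L * Matrix.diagonal dd * U) p q = ∑ j, L p j * dd j * U j q := by
      rw [Matrix.mul_apply]
      refine Finset.sum_congr rfl fun j _ => ?_
      rw [Matrix.mul_diagonal]
    have e2 : (L' * Matrix.diagonal dd * U') p q = ∑ j, L' p j * dd j * U' j q := by
      rw [Matrix.mul_apply]
      refine Finset.sum_congr rfl fun j _ => ?_
      rw [Matrix.mul_diagonal]
    rw [← e1, ← e2, heq]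
  have main : ∀ N : ℕ, ∀ p q : Fin n,
      ((p : ℕ) < N → p ≤ q → U p q = U' p q) ∧
      ((q : ℕ) < N → q ≤ p → L p q = L' p q) := by
    intro N
    induction N with
    | zero =>
      exact fun p q => ⟨fun h => absurd h (Nat.not_lt_zero _),
        fun h => absurd h (Nat.not_lt_zero _)⟩
    | succ N ih =>
      intro p q
      constructor
      · intro hpN hpq
        by_cases hpN' : (p : ℕ) < N
        · exact (ih p q).1 hpN' hpq
        · have hpe : (p : ℕ) = N := by omega
          have hpq' : (p : ℕ) ≤ (q : ℕ) := Fin.le_def.mp hpq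
          have h := hent p q
          rw [← Finset.add_sum_erase _ _ (Finset.mem_univ p),
            ← Finset.add_sum_erase _ _ (Finset.mem_univ p)] at h
          have hrest : (∑ j ∈ Finset.univ.erase p, L p j * dd j * U j q)
              = ∑ j ∈ Finset.univ.erase p, L' p j * dd j * U' j q := by
            refine Finset.sum_congr rfl fun j hj => ?_
            have hjp : j ≠ p := Finset.ne_of_mem_erase hj
            by_cases hlt : (j : ℕ) < (p : ℕ)
            · rw [(ih p j).2 (by omega) (Fin.le_def.mpr (by omega)),
                (ih j q).1 (by omega) (Fin.le_def.mpr (by omega))]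
            · have hgt : (p : ℕ) < (j : ℕ) := by
                have := Fin.val_ne_of_ne hjp
                omega
              rw [hL.2 p j (Fin.lt_def.mpr hgt), hL'.2 p j (Fin.lt_def.mpr hgt)]
              ring
          rw [hrest] at h
          have h2 := add_right_cancel h
          rw [hL.1 p, hL'.1 p] at h2
          simp only [one_mul] at h2
          exact mul_left_cancel₀ (hd p) h2
      · intro hqN hqp
        by_cases hqN' : (q : ℕ) < N
        · exact (ih p q).2 hqN' hqp
        · have hqe : (q : ℕ) = N := by omega
          have hqp' : (q : ℕ) ≤ (p : ℕ) := Fin.le_def.mp hqp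
          have h := hent p q
          rw [← Finset.add_sum_erase _ _ (Finset.mem_univ q),
            ← Finset.add_sum_erase _ _ (Finset.mem_univ q)] at h
          have hrest : (∑ j ∈ Finset.univ.erase q, L p j * dd j * U j q)
              = ∑ j ∈ Finset.univ.erase q, L' p j * dd j * U' j q := by
            refine Finset.sum_congr rfl fun j hj => ?_
            have hjq : j ≠ q := Finset.ne_of_mem_erase hj
            by_cases hlt : (j : ℕ) < (q : ℕ)
            · rw [(ih p j).2 (by omega) (Fin.le_def.mpr (by omega)),
                (ih j q).1 (by omega) (Fin.le_def.mpr (by omega))]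
            · have hgt : (q : ℕ) < (j : ℕ) := by
                have := Fin.val_ne_of_ne hjq
                omega
              rw [hU.2 j q (Fin.lt_def.mpr hgt), hU'.2 j q (Fin.lt_def.mpr hgt)]
              ring
          rw [hrest] at h
          have h2 := add_right_cancel h
          rw [hU.1 q, hU'.1 q] at h2
          simp only [mul_one] at h2
          exact mul_right_cancel₀ (hd q) h2
  constructor
  · ext p q
    rcases le_or_gt q p with hqp | hpq
    · exact (main ((q : ℕ) + 1) p q).2 (by omega) hqp
    · rw [hL.2 p q hpq, hL'.2 p q hpq]
  · ext p q
    rcases le_or_gt p q with hpq | hqp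
    · exact (main ((p : ℕ) + 1) p q).1 (by omega) hpq
    · rw [hU.2 p q hqp, hU'.2 p q hqp]

lemma isUnit_fmat (g : Trip n) (hg : InT g) : IsUnit (fmat g) := by
  rw [Matrix.isUnit_iff_isUnit_det, fmat, Matrix.det_mul, Matrix.det_mul]
  have hdetU : g.1.det = 1 := by
    rw [Matrix.det_of_upperTriangular (fun p q hqp => hg.1.2 p q hqp)]
    simp [hg.1.1]
  have hdetL : g.2.1.det = 1 := by
    have : g.2.1.transpose.det = 1 := by
      rw [Matrix.det_of_upperTriangular
        (fun p q hqp => by rw [Matrix.transpose_apply]; exact hg.2.1.2 q p hqp)]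
      simp [Matrix.transpose_apply, hg.2.1.1]
    rwa [Matrix.det_transpose] at this
  rw [hdetU, hdetL, Matrix.det_diagonal]
  simp only [one_mul, mul_one]
  exact (Finset.prod_ne_zero_iff.mpr fun j _ => Complex.exp_ne_zero _).isUnit

end Aux

open Aux Fin.CommRing in
/-- The generator `β = (β_1⋯β_{n−1})ⁿ` of the center of `B_n` acts on
`U_n × L_n × 𝔱` by simultaneous conjugation:
`g^β = (e^{−2πi g₃} g₁ e^{2πi g₃}, e^{−2πi g₃} g₂ e^{2πi g₃}, g₃)`. -/
theorem stmt11 (n : ℕ) (hn : 2 ≤ n) (g : Trip n) (hg : InT g) :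
    (actRow n)^[n] g
      = (Matrix.diagonal (fun j => Complex.exp (-(2 * Real.pi * Complex.I) * g.2.2 j j))
            * g.1 * Matrix.diagonal (fun j => Complex.exp (2 * Real.pi * Complex.I * g.2.2 j j)),
         Matrix.diagonal (fun j => Complex.exp (-(2 * Real.pi * Complex.I) * g.2.2 j j))
            * g.2.1 * Matrix.diagonal (fun j => Complex.exp (2 * Real.pi * Complex.I * g.2.2 j j)),
         g.2.2) := by
  haveI : NeZero n := ⟨by omega⟩
  obtain ⟨finT, fdiag, fQ⟩ := Aux.outer hn g hg n le_rfl
  set Gn : Trip n := (actRow n)^[n] g with hGn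
  set dd : Fin n → ℂ := fun j => Complex.exp (-(2 * Real.pi * Complex.I) * g.2.2 j j) with hdd
  set Dm : Matrix (Fin n) (Fin n) ℂ := Matrix.diagonal dd with hDm
  set D : Matrix (Fin n) (Fin n) ℂ :=
    Matrix.diagonal (fun j => Complex.exp (2 * Real.pi * Complex.I * g.2.2 j j)) with hD
  have hcast : ((n : ℕ) : Fin n) = 0 := Fin.natCast_self n
  have h3 : Gn.2.2 = g.2.2 := by
    rw [fdiag]
    ext p q
    by_cases hpq : p = q
    · subst hpq
      rw [Matrix.diagonal_apply_eq, hcast, add_zero]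
    · rw [Matrix.diagonal_apply_ne _ hpq]
      exact (hg.2.2 p q hpq).symm
  have hEE : ∀ j : Fin n, dd j * Complex.exp (2 * Real.pi * Complex.I * g.2.2 j j) = 1 := by
    intro j
    rw [hdd, ← Complex.exp_add, show -(2 * (Real.pi : ℂ) * Complex.I) * g.2.2 j j +
      2 * Real.pi * Complex.I * g.2.2 j j = 0 by ring, Complex.exp_zero]
  have hEE' : ∀ j : Fin n, Complex.exp (2 * Real.pi * Complex.I * g.2.2 j j) * dd j = 1 := by
    intro j
    rw [mul_comm]
    exact hEE j
  have hDmD : Dm * D = 1 := by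
    rw [hDm, hD, Matrix.diagonal_mul_diagonal]
    rw [show (fun j => dd j * Complex.exp (2 * Real.pi * Complex.I * g.2.2 j j))
      = fun _ => (1 : ℂ) from funext hEE]
    exact Matrix.diagonal_one
  have hDDm : D * Dm = 1 := by
    rw [hDm, hD, Matrix.diagonal_mul_diagonal]
    rw [show (fun j => Complex.exp (2 * Real.pi * Complex.I * g.2.2 j j) * dd j)
      = fun _ => (1 : ℂ) from funext hEE']
    exact Matrix.diagonal_one
  have hQn : Qmat g n = fmat g * D := by
    ext p q
    simp only [Qmat, Matrix.of_apply, Nat.sub_self, hcast, add_zero, hD, Matrix.mul_diagonal]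
    rw [if_neg (Nat.not_lt_zero _)]
    ring
  have hcancel : D * fmat Gn = fmat g * D := by
    have h := fQ
    rw [hQn, Matrix.mul_assoc] at h
    exact (isUnit_fmat g hg).mul_left_cancel h
  have hfGn : fmat Gn = Dm * fmat g * D := by
    calc fmat Gn = (Dm * D) * fmat Gn := by rw [hDmD, Matrix.one_mul]
      _ = Dm * (D * fmat Gn) := by rw [Matrix.mul_assoc]
      _ = Dm * (fmat g * D) := by rw [hcancel]
      _ = Dm * fmat g * D := by rw [Matrix.mul_assoc]
  have hfGn2 : fmat Gn = Gn.2.1 * Matrix.diagonal dd * Gn.1 := by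
    rw [fmat, h3]
  have hRHS : Dm * fmat g * D = (Dm * g.2.1 * D) * Matrix.diagonal dd * (Dm * g.1 * D) := by
    rw [fmat]
    simp only [Matrix.mul_assoc]
    rw [show D * (Dm * (Dm * (g.1 * D))) = Dm * (g.1 * D) by
      rw [← Matrix.mul_assoc D Dm, hDDm, Matrix.one_mul]]
  have hd : ∀ j, dd j ≠ 0 := fun j => Complex.exp_ne_zero _
  have huU : IsUniUpper (Dm * g.1 * D) := by
    rw [hDm, hD]
    exact uniUpper_conj hg.1 _ _ hEE
  have huL : IsUniLower (Dm * g.2.1 * D) := by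
    rw [hDm, hD]
    exact uniLower_conj hg.2.1 _ _ hEE
  have heq : Gn.2.1 * Matrix.diagonal dd * Gn.1
      = (Dm * g.2.1 * D) * Matrix.diagonal dd * (Dm * g.1 * D) := by
    rw [← hfGn2, hfGn, hRHS]
  obtain ⟨hLeq, hUeq⟩ := LDU_unique hd finT.2.1 huL finT.1 huU heq
  refine Prod.ext hUeq (Prod.ext hLeq h3)
end
end
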